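/- Let μ = (α/2)δ_{−q} + (1−α)Φ_q + (α/2)δ_q where q > 0 satisfies (α/2)q = (1−α)e^{−q²/2}/(√(2π)Φ([−q,q])). Then the 2k-th moment of μ equals (2k−1) times the 2k−2-nd moment of the absolutely continuous part (1−α)Φ_q, for all k ≥ 1. -/

import Mathlib

open Real

lemma stmt17_key (q : ℝ) (n : ℕ) :
    ∫ x in (-q)..q, x ^ (2*n+2) * Real.exp (-x ^ 2 / 2) =
      (2*n+1 : ℝ) * (∫ x in (-q)..q, x ^ (2*n) * Real.exp (-x ^ 2 / 2))
        - 2 * q ^ (2*n+1) * Real.exp (-q ^ 2 / 2) := by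
  have hderiv : ∀ x : ℝ, HasDerivAt (fun x => x ^ (2*n+1) * Real.exp (-x ^ 2 / 2))
      ((2*n+1 : ℝ) * (x ^ (2*n) * Real.exp (-x^2/2)) - x ^ (2*n+2) * Real.exp (-x^2/2)) x := by
    intro x
    have h1 : HasDerivAt (fun x : ℝ => x ^ (2*n+1)) ((2*n+1 : ℝ) * x ^ (2*n)) x := by
      simpa using hasDerivAt_pow (2*n+1) x
    have h2 : HasDerivAt (fun x : ℝ => Real.exp (-x ^ 2 / 2)) (-x * Real.exp (-x^2/2)) x := by
      have h3 : HasDerivAt (fun x : ℝ => -x ^ 2 / 2) (-x) x := by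
        have := ((hasDerivAt_pow 2 x).neg).div_const 2
        refine this.congr_deriv ?_
        ring
      simpa [mul_comm] using h3.exp
    have := h1.mul h2
    refine this.congr_deriv ?_
    ring
  have hcont1 : Continuous fun x : ℝ => x ^ (2*n) * Real.exp (-x ^ 2 / 2) := by fun_prop
  have hcont2 : Continuous fun x : ℝ => x ^ (2*n+2) * Real.exp (-x ^ 2 / 2) := by fun_prop
  have hint : IntervalIntegrable
      (fun x => (2*n+1 : ℝ) * (x ^ (2*n) * Real.exp (-x^2/2)) - x ^ (2*n+2) * Real.exp (-x^2/2))
      MeasureTheory.volume (-q) q := by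
    apply Continuous.intervalIntegrable
    fun_prop
  have hIBP := intervalIntegral.integral_eq_sub_of_hasDerivAt (fun x _ => hderiv x) hint
  have hsplit : ∫ x in (-q)..q,
      ((2*n+1 : ℝ) * (x ^ (2*n) * Real.exp (-x^2/2)) - x ^ (2*n+2) * Real.exp (-x^2/2)) =
      (2*n+1 : ℝ) * (∫ x in (-q)..q, x ^ (2*n) * Real.exp (-x ^ 2 / 2))
        - ∫ x in (-q)..q, x ^ (2*n+2) * Real.exp (-x ^ 2 / 2) := by
    rw [intervalIntegral.integral_sub (by apply Continuous.intervalIntegrable; fun_prop)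
      (hcont2.intervalIntegrable _ _), intervalIntegral.integral_const_mul]
  rw [hsplit] at hIBP
  have hodd : (-q) ^ (2*n+1) = -(q ^ (2*n+1)) := Odd.neg_pow ⟨n, by ring⟩ q
  have hneg : (-q) ^ 2 = q ^ 2 := by ring
  rw [hodd, hneg] at hIBP
  linarith [hIBP]

/-- Let `μ = (α/2)δ_{-q} + (1-α)Φ_q + (α/2)δ_q` with `q > 0` satisfying
`(α/2)q = (1-α)e^{-q²/2}/(√(2π)Φ([-q,q]))`. Then for all `k ≥ 1` the `2k`-th moment of `μ`
equals `(2k-1)` times the `(2k-2)`-nd moment of the absolutely continuous part `(1-α)Φ_q`. -/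
theorem stmt17 (α q : ℝ) (hα : α ∈ Set.Ioo (0:ℝ) 1) (hq : 0 < q)
    (hqeq : α / 2 * q = (1 - α) * Real.exp (-q ^ 2 / 2) /
        (Real.sqrt (2 * π) *
          ((1 / Real.sqrt (2 * π)) * ∫ x in (-q)..q, Real.exp (-x ^ 2 / 2))))
    (k : ℕ) (hk : 1 ≤ k) :
    α / 2 * (-q) ^ (2 * k) +
        (1 - α) * ((∫ x in (-q)..q, x ^ (2 * k) * Real.exp (-x ^ 2 / 2)) /
          ∫ x in (-q)..q, Real.exp (-x ^ 2 / 2)) +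
        α / 2 * q ^ (2 * k) =
      (2 * k - 1) *
        ((1 - α) * ((∫ x in (-q)..q, x ^ (2 * k - 2) * Real.exp (-x ^ 2 / 2)) /
          ∫ x in (-q)..q, Real.exp (-x ^ 2 / 2))) := by
  obtain ⟨j, rfl⟩ : ∃ j, k = j + 1 := ⟨k - 1, by omega⟩
  have e1 : 2 * (j + 1) = 2 * j + 2 := by ring
  have e2 : 2 * (j + 1) - 2 = 2 * j := by omega
  rw [e2, e1]
  set Z := ∫ x in (-q)..q, Real.exp (-x ^ 2 / 2) with hZdef
  have hZpos : 0 < Z := by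
    apply intervalIntegral.intervalIntegral_pos_of_pos
    · exact (by fun_prop : Continuous fun x : ℝ => Real.exp (-x ^ 2 / 2)).intervalIntegrable _ _
    · intro x; exact Real.exp_pos _
    · linarith
  have hsq : Real.sqrt (2 * π) ≠ 0 := by
    positivity
  have hqeq' : α / 2 * q * Z = (1 - α) * Real.exp (-q ^ 2 / 2) := by
    rw [show Real.sqrt (2 * π) * ((1 / Real.sqrt (2 * π)) * Z) = Z by
      field_simp] at hqeq
    field_simp at hqeq
    rw [neg_div]
    linarith [hqeq]
  have hA := stmt17_key q j
  rw [hA]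
  have hneg : (-q) ^ (2 * j + 2) = q ^ (2 * j + 2) := Even.neg_pow ⟨j + 1, by ring⟩ q
  rw [hneg]
  have hZne : Z ≠ 0 := hZpos.ne'
  set B := ∫ x in (-q)..q, x ^ (2 * j) * Real.exp (-x ^ 2 / 2) with hBdef
  set E := Real.exp (-q ^ 2 / 2) with hEdef
  have key2 : (1 - α) * (((2 * (j:ℝ) + 1) * B - 2 * q ^ (2 * j + 1) * E) / Z) =
      (2 * (j:ℝ) + 1) * ((1 - α) * (B / Z)) - α * q ^ (2 * j + 2) := by
    field_simp
    linear_combination (2 * q ^ (2 * j + 1)) * hqeq'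
  rw [key2]
  push_cast
  ring
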